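/- For a real symmetric n×n matrix A with all entries in [−a, a] (a ≥ 0), the spectral spread satisfies λ_max(A) − λ_min(A) ≤ √2 · a · n. -/

import Mathlib

open Matrix Finset

lemma trace_sq_eq_sum_eig_sq {n : ℕ} (A : Matrix (Fin n) (Fin n) ℝ) (hA : A.IsHermitian) :
    (A * A).trace = ∑ i, hA.eigenvalues i ^ 2 := by
  set U := (hA.eigenvectorUnitary : Matrix (Fin n) (Fin n) ℝ)
  have hU : star U * U = 1 := Unitary.coe_star_mul_self _
  have hspec := hA.spectral_theorem
  rw [Unitary.conjStarAlgAut_apply] at hspec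
  calc (A * A).trace
      = (U * (diagonal (RCLike.ofReal ∘ hA.eigenvalues) * diagonal (RCLike.ofReal ∘ hA.eigenvalues)) * star U).trace := by
        conv_lhs => rw [hspec]
        rw [show (U * diagonal (RCLike.ofReal ∘ hA.eigenvalues) * star U) * (U * diagonal (RCLike.ofReal ∘ hA.eigenvalues) * star U) = U * (diagonal (RCLike.ofReal ∘ hA.eigenvalues) * ((star U * U) * diagonal (RCLike.ofReal ∘ hA.eigenvalues))) * star U by noncomm_ring]
        rw [hU, one_mul]
    _ = ∑ i, hA.eigenvalues i ^ 2 := by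
        rw [trace_mul_comm, ← mul_assoc, hU, one_mul, diagonal_mul_diagonal, trace_diagonal]
        simp [sq]

theorem stmt_5 {n : ℕ} [NeZero n] (A : Matrix (Fin n) (Fin n) ℝ) (hA : A.IsHermitian)
    (a : ℝ) (ha : 0 ≤ a) (hbound : ∀ i j, |A i j| ≤ a) :
    Finset.univ.sup' Finset.univ_nonempty hA.eigenvalues -
      Finset.univ.inf' Finset.univ_nonempty hA.eigenvalues ≤ Real.sqrt 2 * a * n := by
  have hsum : ∑ i, hA.eigenvalues i ^ 2 ≤ a ^ 2 * n ^ 2 := by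
    rw [← trace_sq_eq_sum_eig_sq A hA]
    have hsym : ∀ i j, A j i = A i j := fun i j => by
      conv_lhs => rw [← hA]
      rfl
    have htr : (A * A).trace = ∑ i, ∑ j, A i j * A j i := by
      simp [Matrix.trace, Matrix.diag, Matrix.mul_apply]
    rw [htr]
    have : ∀ i j : Fin n, A i j * A j i = (A i j) ^ 2 := fun i j => by rw [hsym i j, sq]
    simp_rw [this]
    calc ∑ i, ∑ j, (A i j) ^ 2 ≤ ∑ i : Fin n, ∑ j : Fin n, a ^ 2 := by
          apply Finset.sum_le_sum; intro i _; apply Finset.sum_le_sum; intro j _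
          calc (A i j) ^ 2 = |A i j| ^ 2 := (sq_abs _).symm
            _ ≤ a ^ 2 := by
                apply pow_le_pow_left₀ (abs_nonneg _) (hbound i j)
      _ = a ^ 2 * n ^ 2 := by simp [sq]; ring
  obtain ⟨iM, _, hM⟩ := Finset.exists_mem_eq_sup' (Finset.univ_nonempty (α := Fin n)) hA.eigenvalues
  obtain ⟨im, _, hm⟩ := Finset.exists_mem_eq_inf' (Finset.univ_nonempty (α := Fin n)) hA.eigenvalues
  set M := Finset.univ.sup' Finset.univ_nonempty hA.eigenvalues
  set m := Finset.univ.inf' Finset.univ_nonempty hA.eigenvalues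
  have hn : (0:ℝ) ≤ n := Nat.cast_nonneg n
  have hs2 : Real.sqrt 2 ^ 2 = 2 := Real.sq_sqrt (by norm_num)
  have hs2n : (0:ℝ) ≤ Real.sqrt 2 := Real.sqrt_nonneg 2
  by_cases hij : iM = im
  · have : M = m := by rw [hM, hm, hij]
    rw [this]
    simp
    positivity
  · have hkey : M ^ 2 + m ^ 2 ≤ a ^ 2 * n ^ 2 := by
      have := Finset.sum_le_sum_of_subset_of_nonneg
        (Finset.subset_univ {iM, im}) (fun i _ _ => sq_nonneg (hA.eigenvalues i))
      rw [Finset.sum_pair hij] at this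
      rw [hM, hm]
      exact this.trans hsum
    have hsq : (Real.sqrt 2 * a * ↑n) ^ 2 = 2 * a ^ 2 * (n:ℝ) ^ 2 := by
      rw [mul_pow, mul_pow, hs2]
    nlinarith [sq_nonneg (M + m), hsq, mul_nonneg (mul_nonneg hs2n ha) hn]
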